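/- For every positive integer k and every m ≥ k, the maximum number of columns of an m-rowed simple (0,1)-matrix containing no configuration of K_k (the k × 2^k matrix of all distinct (0,1)-columns) equals the sum of binomial(m, i) for i from 0 to k-1. -/

import Mathlib

open Finset

/-- `F` is a configuration in the simple matrix `A` (columns of `A` form a finset):
there is an injection of rows such that the multiset `F` of columns is a sub-multiset
of the restricted columns of `A`. -/
def ConfigIn {s k m : ℕ} (F : Multiset (Fin k → Fin s)) (A : Finset (Fin m → Fin s)) : Prop :=
  ∃ ρ : Fin k ↪ Fin m, F ≤ A.1.map (fun col => col ∘ ρ)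

/-- The forbidden number: the maximum number of columns of an `m`-rowed simple
`s`-matrix avoiding `F` as a configuration. -/
noncomputable def forb (m s : ℕ) {k : ℕ} (F : Multiset (Fin k → Fin s)) : ℕ :=
  sSup {n : ℕ | ∃ A : Finset (Fin m → Fin s), ¬ ConfigIn F A ∧ A.card = n}

/-- The 2-rowed configuration with `a` columns (0,0), `b` columns (1,0),
`c` columns (0,1) and `d` columns (1,1), viewed as a 3-matrix. -/
def Fabcd (a b c d : ℕ) : Multiset (Fin 2 → Fin 3) :=
  Multiset.replicate a ![0, 0] + Multiset.replicate b ![1, 0] +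
  Multiset.replicate c ![0, 1] + Multiset.replicate d ![1, 1]

/-- `p` copies of `K₂`. -/
def pK2 (p : ℕ) : Multiset (Fin 2 → Fin 3) := Fabcd p p p p

/-- `p` copies of `I₂`. -/
def pI2 (p : ℕ) : Multiset (Fin 2 → Fin 3) := Fabcd 0 p p 0

/-- support of a 0-1 column -/
def supp {m : ℕ} (f : Fin m → Fin 2) : Finset (Fin m) := univ.filter (fun i => f i = 1)

lemma supp_injective {m : ℕ} : Function.Injective (supp (m := m)) := by
  intro f g h
  funext i
  have : f i = 1 ↔ g i = 1 := by
    constructor <;> intro hi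
    · have : i ∈ supp f := by simp [supp, hi]
      rw [h] at this; simpa [supp] using this
    · have : i ∈ supp g := by simp [supp, hi]
      rw [← h] at this; simpa [supp] using this
  have h2 : ∀ x : Fin 2, x = 0 ∨ x = 1 := by decide
  rcases h2 (f i) with h1 | h1 <;> rcases h2 (g i) with h2' | h2' <;> simp_all

lemma mem_supp {m : ℕ} {f : Fin m → Fin 2} {i : Fin m} : i ∈ supp f ↔ f i = 1 := by
  simp [supp]

lemma card_lt_sets (k m : ℕ) :
    ((Finset.range k).biUnion (fun i => Finset.powersetCard i (univ : Finset (Fin m)))).card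
      = ∑ i ∈ Finset.range k, Nat.choose m i := by
  rw [card_biUnion]
  · refine Finset.sum_congr rfl fun i _ => ?_
    rw [card_powersetCard, card_univ, Fintype.card_fin]
  · intro i _ j _ hij
    simp only [Finset.disjoint_left]
    intro s hs hs'
    rw [mem_powersetCard] at hs hs'
    exact hij (hs.2.symm.trans hs'.2)

lemma mem_biUnion_iff {k m : ℕ} (s : Finset (Fin m)) :
    s ∈ (Finset.range k).biUnion (fun i => Finset.powersetCard i (univ : Finset (Fin m)))
      ↔ s.card < k := by
  simp only [mem_biUnion, mem_range, mem_powersetCard_univ]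
  constructor
  · rintro ⟨i, hi, rfl⟩; exact hi
  · intro h; exact ⟨s.card, h, rfl⟩

lemma upper_bound {k m : ℕ} (A : Finset (Fin m → Fin 2))
    (hA : ¬ ConfigIn ((Finset.univ : Finset (Fin k → Fin 2)).val) A) :
    A.card ≤ ∑ i ∈ Finset.range k, Nat.choose m i := by
  set 𝒜 : Finset (Finset (Fin m)) := A.image supp with h𝒜
  have hcard : A.card = 𝒜.card := (card_image_of_injective _ supp_injective).symm
  rw [hcard]
  refine (Finset.card_le_card_shatterer 𝒜).trans ?_
  rw [← card_lt_sets k m]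
  apply Finset.card_le_card
  intro s hs
  rw [mem_biUnion_iff]
  by_contra hcontra
  push_neg at hcontra
  -- s is shattered with card ≥ k; extract a k-subset t, also shattered
  have hshat : 𝒜.Shatters s := Finset.mem_shatterer.1 hs
  obtain ⟨t, hts, htk⟩ := Finset.exists_subset_card_eq hcontra
  have hshatt : 𝒜.Shatters t := hshat.mono_right hts
  -- build the row embedding
  have hord := t.orderIsoOfFin htk
  set ρ : Fin k ↪ Fin m :=
    ⟨fun j => (hord j : Fin m), fun a b hab => hord.injective (Subtype.ext hab)⟩ with hρ
  have hρt : ∀ j, ρ j ∈ t := fun j => (hord j).2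
  apply hA
  refine ⟨ρ, ?_⟩
  rw [Multiset.le_iff_subset (univ : Finset (Fin k → Fin 2)).nodup]
  intro g _
  rw [Multiset.mem_map]
  -- the trace we want: positions of ones among rows of t
  set T : Finset (Fin m) := (univ.filter (fun j => g j = 1)).image ρ with hT
  have hTt : T ⊆ t := by
    intro x hx
    rw [hT, mem_image] at hx
    obtain ⟨j, _, rfl⟩ := hx
    exact hρt j
  obtain ⟨u, hu, hut⟩ := hshatt hTt
  rw [h𝒜, mem_image] at hu
  obtain ⟨f, hfA, rfl⟩ := hu
  refine ⟨f, hfA, ?_⟩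
  funext j
  have key : f (ρ j) = 1 ↔ g j = 1 := by
    constructor
    · intro h1
      have hmem : ρ j ∈ t ∩ supp f := mem_inter.2 ⟨hρt j, mem_supp.2 h1⟩
      rw [hut, hT, mem_image] at hmem
      obtain ⟨j', hj', hjj'⟩ := hmem
      rw [mem_filter] at hj'
      rw [← ρ.injective hjj']; exact hj'.2
    · intro h1
      have hmem : ρ j ∈ T := by
        rw [hT, mem_image]
        exact ⟨j, mem_filter.2 ⟨mem_univ _, h1⟩, rfl⟩
      rw [← hut, mem_inter] at hmem
      exact mem_supp.1 hmem.2
  have h2 : ∀ x : Fin 2, x = 0 ∨ x = 1 := by decide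
  simp only [Function.comp_apply]
  rcases h2 (f (ρ j)) with h1 | h1 <;> rcases h2 (g j) with h2' | h2' <;> simp_all

lemma lower_construction (k m : ℕ) (hm : k ≤ m) :
    ∃ A : Finset (Fin m → Fin 2), ¬ ConfigIn ((Finset.univ : Finset (Fin k → Fin 2)).val) A ∧
      A.card = ∑ i ∈ Finset.range k, Nat.choose m i := by
  refine ⟨univ.filter (fun f => (supp f).card < k), ?_, ?_⟩
  · rintro ⟨ρ, hle⟩
    have h1 : (fun _ => 1 : Fin k → Fin 2) ∈
        ((univ.filter (fun f : Fin m → Fin 2 => (supp f).card < k)).val.map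
          (fun col => col ∘ ρ)) :=
      Multiset.mem_of_le hle (by simp)
    rw [Multiset.mem_map] at h1
    obtain ⟨f, hf, hfρ⟩ := h1
    rw [Finset.mem_val, mem_filter] at hf
    have hsub : (univ.image ρ : Finset (Fin m)) ⊆ supp f := by
      intro x hx
      rw [mem_image] at hx
      obtain ⟨j, _, rfl⟩ := hx
      exact mem_supp.2 (congrFun hfρ j)
    have := card_le_card hsub
    rw [card_image_of_injective _ ρ.injective, card_univ, Fintype.card_fin] at this
    omega
  · have himg : (univ.filter (fun f : Fin m → Fin 2 => (supp f).card < k)).image supp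
        = (Finset.range k).biUnion (fun i => Finset.powersetCard i (univ : Finset (Fin m))) := by
      ext s
      rw [mem_biUnion_iff, mem_image]
      constructor
      · rintro ⟨f, hf, rfl⟩
        exact (mem_filter.1 hf).2
      · intro hcard
        have hsupp : supp (fun i => if i ∈ s then (1 : Fin 2) else 0) = s := by
          ext i
          rw [mem_supp]
          split <;> simp_all
        exact ⟨fun i => if i ∈ s then 1 else 0, mem_filter.2 ⟨mem_univ _, by rw [hsupp]; exact hcard⟩, hsupp⟩
    rw [← card_image_of_injective (univ.filter (fun f : Fin m → Fin 2 => (supp f).card < k))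
      supp_injective, himg, card_lt_sets]

/-- Sauer–Shelah–Vapnik–Chervonenkis: `forb(m, K_k) = ∑_{i<k} C(m,i)`. -/
theorem sauer_shelah (k m : ℕ) (hk : 1 ≤ k) (hm : k ≤ m) :
    forb m 2 ((Finset.univ : Finset (Fin k → Fin 2)).val) =
      ∑ i ∈ Finset.range k, Nat.choose m i := by
  obtain ⟨A0, hA0, hA0card⟩ := lower_construction k m hm
  have hmem : (∑ i ∈ Finset.range k, Nat.choose m i) ∈
      {n : ℕ | ∃ A : Finset (Fin m → Fin 2),
        ¬ ConfigIn ((Finset.univ : Finset (Fin k → Fin 2)).val) A ∧ A.card = n} :=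
    ⟨A0, hA0, hA0card⟩
  have hub : ∀ n ∈ {n : ℕ | ∃ A : Finset (Fin m → Fin 2),
      ¬ ConfigIn ((Finset.univ : Finset (Fin k → Fin 2)).val) A ∧ A.card = n},
      n ≤ ∑ i ∈ Finset.range k, Nat.choose m i := by
    rintro n ⟨A, hA, rfl⟩
    exact upper_bound A hA
  exact le_antisymm (csSup_le ⟨_, hmem⟩ hub) (le_csSup ⟨_, hub⟩ hmem)
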